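/- arXiv:2111.15221 — 3 statements merged into one kernel-verified Lean document; each statement's English description precedes it below -/
import Mathlib

section
/- Let k ≥ 1 be a natural number, let λ : Fin k → ℝ satisfy 0 ≤ λ s ≤ 1 for all s, and let ε be a real number with 0 < ε < 1. Assume (1/k)·∑_{s} (λ s − (λ s)²)² ≤ ε·(ε − ε²)². Define μ s := 1 if λ s ≥ 1 − ε and μ s := 0 otherwise. Then (1/k)·∑_{s} (λ s − μ s)² ≤ ε² + ε·(1 − ε)². -/
theorem stmt_1 (k : ℕ) (hk : 1 ≤ k) (lam : Fin k → ℝ)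
    (hlam : ∀ s, 0 ≤ lam s ∧ lam s ≤ 1) (ε : ℝ) (hε0 : 0 < ε) (hε1 : ε < 1)
    (hsum : (1 / (k : ℝ)) * ∑ s, (lam s - (lam s) ^ 2) ^ 2 ≤ ε * (ε - ε ^ 2) ^ 2)
    (μ : Fin k → ℝ) (hμ : ∀ s, μ s = if 1 - ε ≤ lam s then 1 else 0) :
    (1 / (k : ℝ)) * ∑ s, (lam s - μ s) ^ 2 ≤ ε ^ 2 + ε * (1 - ε) ^ 2 := by
  have hk' : (0:ℝ) < k := by exact_mod_cast hk
  classical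
  set M := Finset.univ.filter (fun s => ε < lam s ∧ lam s < 1 - ε) with hMdef
  have hd0 : (0:ℝ) < ε - ε^2 := by nlinarith
  have hd : (0:ℝ) < (ε - ε^2)^2 := pow_pos hd0 2
  -- full sum bound
  have hS : ∑ s, (lam s - lam s ^ 2) ^ 2 ≤ k * (ε * (ε - ε^2)^2) := by
    have h := mul_le_mul_of_nonneg_left hsum hk'.le
    calc ∑ s, (lam s - lam s ^ 2) ^ 2
        = (k : ℝ) * ((1 / (k:ℝ)) * ∑ s, (lam s - lam s ^ 2) ^ 2) := by
          field_simp
      _ ≤ (k:ℝ) * (ε * (ε - ε^2)^2) := h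
  -- card bound
  have hterm : ∀ s ∈ M, (ε - ε^2)^2 ≤ (lam s - lam s ^ 2) ^ 2 := by
    intro s hs
    simp only [hMdef, Finset.mem_filter] at hs
    obtain ⟨h1, h2⟩ := hs.2
    have h3 := (hlam s).1
    have h4 := (hlam s).2
    have hA : ε - ε^2 ≤ lam s - lam s ^ 2 := by
      nlinarith [mul_pos (sub_pos.mpr h1) (sub_pos.mpr (by linarith : ε < 1 - lam s))]
    exact pow_le_pow_left₀ hd0.le hA 2
  have hcard1 : (M.card : ℝ) * (ε - ε^2)^2 ≤ ∑ s ∈ M, (lam s - lam s ^ 2) ^ 2 := by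
    have := Finset.card_nsmul_le_sum M (fun s => (lam s - lam s ^ 2) ^ 2) ((ε - ε^2)^2) hterm
    simpa [nsmul_eq_mul] using this
  have hsub : ∑ s ∈ M, (lam s - lam s ^ 2) ^ 2 ≤ ∑ s, (lam s - lam s ^ 2) ^ 2 := by
    apply Finset.sum_le_sum_of_subset_of_nonneg (Finset.subset_univ M)
    intro s _ _; positivity
  have hMcard : (M.card : ℝ) ≤ ε * k := by
    have h := le_trans hcard1 (le_trans hsub hS)
    have : (M.card : ℝ) * (ε - ε^2)^2 ≤ (ε * k) * (ε - ε^2)^2 := by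
      calc (M.card : ℝ) * (ε - ε^2)^2 ≤ k * (ε * (ε - ε^2)^2) := h
        _ = (ε * k) * (ε - ε^2)^2 := by ring
    exact le_of_mul_le_mul_right this hd
  -- per-term bounds
  have hbound : ∀ s, (lam s - μ s) ^ 2 ≤ if s ∈ M then (1-ε)^2 else ε^2 := by
    intro s
    have h3 := (hlam s).1
    have h4 := (hlam s).2
    by_cases hsM : s ∈ M
    · simp only [hMdef, Finset.mem_filter] at hsM
      obtain ⟨h1, h2⟩ := hsM.2
      have hμs : μ s = 0 := by rw [hμ s, if_neg (by linarith)]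
      simp only [if_pos (by simpa [hMdef] using ⟨h1, h2⟩ : s ∈ M)]
      rw [hμs]
      nlinarith
    · rw [if_neg hsM, hμ s]
      simp only [hMdef, Finset.mem_filter, Finset.mem_univ, true_and, not_and, not_lt] at hsM
      by_cases hge : 1 - ε ≤ lam s
      · rw [if_pos hge]; nlinarith
      · rw [if_neg hge]
        push_neg at hge
        have : lam s ≤ ε := by
          by_contra hc
          push_neg at hc
          linarith [hsM hc]
        nlinarith
  have hsum2 : ∑ s, (lam s - μ s) ^ 2 ≤ ∑ s : Fin k, (if s ∈ M then (1-ε)^2 else ε^2) :=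
    Finset.sum_le_sum (fun s _ => hbound s)
  have hsum3 : ∑ s : Fin k, (if s ∈ M then (1-ε)^2 else ε^2)
      = (M.card : ℝ) * (1-ε)^2 + ((k : ℝ) - M.card) * ε^2 := by
    rw [Finset.sum_ite, Finset.sum_const, Finset.sum_const, nsmul_eq_mul, nsmul_eq_mul]
    have hf1 : Finset.univ.filter (fun s => s ∈ M) = M := by
      ext s; simp
    have hf2 : (Finset.univ.filter (fun s => ¬ s ∈ M)).card = k - M.card := by
      rw [Finset.filter_not, Finset.card_sdiff_of_subset]
      · simp [hf1]
      · exact hf1 ▸ Finset.filter_subset _ _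
    rw [hf1, hf2, Nat.cast_sub (by simpa using Finset.card_le_univ M)]
  have hcle : (0:ℝ) ≤ (M.card : ℝ) := Nat.cast_nonneg _
  have htot : ∑ s, (lam s - μ s) ^ 2 ≤ ε * k * (1-ε)^2 + k * ε^2 := by
    have h1 : (M.card : ℝ) * (1-ε)^2 ≤ ε * k * (1-ε)^2 :=
      mul_le_mul_of_nonneg_right hMcard (sq_nonneg _)
    have h2 : ((k : ℝ) - M.card) * ε^2 ≤ k * ε^2 := by nlinarith [sq_nonneg ε]
    calc ∑ s, (lam s - μ s) ^ 2 ≤ _ := hsum2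
      _ = (M.card : ℝ) * (1-ε)^2 + ((k : ℝ) - M.card) * ε^2 := hsum3
      _ ≤ ε * k * (1-ε)^2 + k * ε^2 := by linarith
  have hfin := mul_le_mul_of_nonneg_left htot (by positivity : (0:ℝ) ≤ 1 / k)
  have heq : (1/(k:ℝ)) * (ε * k * (1-ε)^2 + k * ε^2) = ε * (1-ε)^2 + ε^2 := by
    field_simp
  rw [heq] at hfin
  linarith
end

section
/- Let k ≥ 1, let e ∈ M_k(ℂ) be a Hermitian matrix all of whose eigenvalues lie in [0, 1] (equivalently, e and 1 − e are positive semidefinite), and let 0 < ε < 1. Write the spectral decomposition e = U·diag(λ₁,…,λ_k)·U*, where U is a unitary of eigenvectors and λ_s are the eigenvalues of e, and define the spectral projection P := U·diag(μ₁,…,μ_k)·U*, where μ_s := 1 if λ_s ≥ 1 − ε and μ_s := 0 otherwise. If (1/k)·Re tr((e − e²)*·(e − e²)) ≤ ε·(ε − ε²)², then (1/k)·Re tr((e − P)*·(e − P)) ≤ ε² + ε·(1 − ε)². -/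
open Matrix in
theorem trace_aux (k : ℕ) (U : Matrix (Fin k) (Fin k) ℂ)
    (hU : U ∈ Matrix.unitaryGroup (Fin k) ℂ) (d : Fin k → ℝ) :
    (Matrix.trace ((U * Matrix.diagonal (fun s => (d s : ℂ)) * Uᴴ)ᴴ *
      (U * Matrix.diagonal (fun s => (d s : ℂ)) * Uᴴ))).re = ∑ s, (d s)^2 := by
  have hUU : Uᴴ * U = 1 := by
    exact (Matrix.mem_unitaryGroup_iff'.mp hU)
  set D : Matrix (Fin k) (Fin k) ℂ := Matrix.diagonal (fun s => (d s : ℂ)) with hD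
  have hDc : (U * D * Uᴴ)ᴴ = U * Dᴴ * Uᴴ := by
    rw [conjTranspose_mul, conjTranspose_mul, conjTranspose_conjTranspose, Matrix.mul_assoc]
  have h1 : (U * Dᴴ * Uᴴ) * (U * D * Uᴴ) = U * (Dᴴ * D) * Uᴴ := by
    simp only [Matrix.mul_assoc]
    rw [← Matrix.mul_assoc Uᴴ U, hUU, Matrix.one_mul]
  have h2 : Matrix.trace (U * (Dᴴ * D) * Uᴴ) = Matrix.trace (Dᴴ * D) := by
    rw [Matrix.trace_mul_cycle, ← Matrix.mul_assoc, hUU, Matrix.one_mul]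
  rw [hDc, h1, h2, hD, diagonal_conjTranspose, diagonal_mul_diagonal, Matrix.trace_diagonal]
  simp [← Complex.ofReal_mul, Complex.ofReal_re, pow_two]

open Matrix in
theorem stmt_2 (k : ℕ) (hk : 1 ≤ k) (e U : Matrix (Fin k) (Fin k) ℂ)
    (he : e.IsHermitian) (hU : U ∈ Matrix.unitaryGroup (Fin k) ℂ)
    (lam : Fin k → ℝ) (hlam : ∀ s, 0 ≤ lam s ∧ lam s ≤ 1)
    (hdecomp : e = U * Matrix.diagonal (fun s => (lam s : ℂ)) * Uᴴ)
    (ε : ℝ) (hε0 : 0 < ε) (hε1 : ε < 1)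
    (P : Matrix (Fin k) (Fin k) ℂ)
    (hP : P = U * Matrix.diagonal
      (fun s => if 1 - ε ≤ lam s then (1 : ℂ) else 0) * Uᴴ)
    (hsum : (1 / (k : ℝ)) * (Matrix.trace ((e - e ^ 2)ᴴ * (e - e ^ 2))).re
      ≤ ε * (ε - ε ^ 2) ^ 2) :
    (1 / (k : ℝ)) * (Matrix.trace ((e - P)ᴴ * (e - P))).re
      ≤ ε ^ 2 + ε * (1 - ε) ^ 2 := by
  have hUU : Uᴴ * U = 1 := by
    exact (Matrix.mem_unitaryGroup_iff'.mp hU)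
  set μ : Fin k → ℝ := fun s => if 1 - ε ≤ lam s then 1 else 0 with hμ
  have heP : e - P = U * Matrix.diagonal (fun s => ((lam s - μ s : ℝ) : ℂ)) * Uᴴ := by
    have harg : (fun s => (lam s : ℂ) - if 1 - ε ≤ lam s then 1 else 0)
        = (fun s => ((lam s - μ s : ℝ) : ℂ)) := by
      funext s
      simp only [hμ]
      by_cases h : 1 - ε ≤ lam s
      · rw [if_pos h, if_pos h]
        push_cast
        ring
      · rw [if_neg h, if_neg h]
        push_cast
        ring
    rw [hdecomp, hP, ← Matrix.sub_mul, ← Matrix.mul_sub, Matrix.diagonal_sub, harg]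
  have hsq : e ^ 2 = U * Matrix.diagonal (fun s => (((lam s) ^ 2 : ℝ) : ℂ)) * Uᴴ := by
    rw [pow_two, hdecomp]
    simp only [Matrix.mul_assoc]
    rw [← Matrix.mul_assoc Uᴴ U, hUU, Matrix.one_mul,
      ← Matrix.mul_assoc (Matrix.diagonal _), Matrix.diagonal_mul_diagonal]
    congr 3
    funext s
    push_cast
    ring
  have hee : e - e ^ 2 = U * Matrix.diagonal (fun s => ((lam s - (lam s) ^ 2 : ℝ) : ℂ)) * Uᴴ := by
    have harg : (fun s => (lam s : ℂ) - ((lam s ^ 2 : ℝ) : ℂ))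
        = (fun s => ((lam s - lam s ^ 2 : ℝ) : ℂ)) := by
      funext s
      push_cast
      ring
    rw [hsq, hdecomp, ← Matrix.sub_mul, ← Matrix.mul_sub, Matrix.diagonal_sub, harg]
  rw [heP, trace_aux k U hU]
  rw [hee, trace_aux k U hU (fun s => lam s - (lam s) ^ 2)] at hsum
  have hk0 : (0 : ℝ) < k := by exact_mod_cast hk
  set B : Finset (Fin k) := Finset.univ.filter (fun s => ε ≤ lam s ∧ lam s < 1 - ε) with hB
  have hBcard : (B.card : ℝ) * (ε - ε ^ 2) ^ 2 ≤ ∑ s, (lam s - (lam s) ^ 2) ^ 2 := by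
    calc (B.card : ℝ) * (ε - ε ^ 2) ^ 2 = ∑ _s ∈ B, (ε - ε ^ 2) ^ 2 := by
          rw [Finset.sum_const, nsmul_eq_mul]
      _ ≤ ∑ s ∈ B, (lam s - (lam s) ^ 2) ^ 2 := by
          apply Finset.sum_le_sum
          intro s hs
          rw [hB, Finset.mem_filter] at hs
          obtain ⟨_, h1, h2⟩ := hs
          have ha : ε - ε ^ 2 ≤ lam s - (lam s) ^ 2 := by
            nlinarith [mul_nonneg (sub_nonneg.2 h1)
              (show (0:ℝ) ≤ 1 - ε - lam s by linarith)]
          have hb : (0:ℝ) ≤ ε - ε ^ 2 := by nlinarith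
          exact pow_le_pow_left₀ hb ha 2
      _ ≤ ∑ s, (lam s - (lam s) ^ 2) ^ 2 := by
          apply Finset.sum_le_sum_of_subset_of_nonneg (Finset.filter_subset _ _)
          intros
          positivity
  have hεε0 : (0:ℝ) < ε - ε ^ 2 := by nlinarith
  have hεε : (0 : ℝ) < (ε - ε ^ 2) ^ 2 := by positivity
  have hS : ∑ s, (lam s - (lam s) ^ 2) ^ 2 ≤ (k : ℝ) * (ε * (ε - ε ^ 2) ^ 2) := by
    have h := mul_le_mul_of_nonneg_left hsum (le_of_lt hk0)
    calc ∑ s, (lam s - (lam s) ^ 2) ^ 2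
        = (k : ℝ) * ((1 / (k : ℝ)) * ∑ s, (lam s - (lam s) ^ 2) ^ 2) := by
          field_simp
      _ ≤ (k : ℝ) * (ε * (ε - ε ^ 2) ^ 2) := h
  have hBk : (B.card : ℝ) ≤ (k : ℝ) * ε := by
    have h : (B.card : ℝ) * (ε - ε ^ 2) ^ 2 ≤ ((k : ℝ) * ε) * (ε - ε ^ 2) ^ 2 := by
      calc (B.card : ℝ) * (ε - ε ^ 2) ^ 2 ≤ ∑ s, (lam s - (lam s) ^ 2) ^ 2 := hBcard
        _ ≤ (k : ℝ) * (ε * (ε - ε ^ 2) ^ 2) := hS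
        _ = ((k : ℝ) * ε) * (ε - ε ^ 2) ^ 2 := by ring
    exact le_of_mul_le_mul_right h hεε
  have hf : ∑ s, (lam s - μ s) ^ 2 ≤ (k : ℝ) * ε ^ 2 + (B.card : ℝ) * (1 - ε) ^ 2 := by
    calc ∑ s, (lam s - μ s) ^ 2
        ≤ ∑ s, (ε ^ 2 + if s ∈ B then (1 - ε) ^ 2 else 0) := by
          apply Finset.sum_le_sum
          intro s _
          have h0 := (hlam s).1
          have h1 := (hlam s).2
          by_cases hm : 1 - ε ≤ lam s
          · have hμs : μ s = 1 := if_pos hm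
            rw [hμs]
            have hnB : s ∉ B := by
              rw [hB, Finset.mem_filter]
              push_neg
              intro _ h
              linarith
            simp only [hnB, if_false]
            nlinarith
          · have hμs : μ s = 0 := if_neg hm
            rw [hμs]
            push_neg at hm
            by_cases hε' : ε ≤ lam s
            · have hsB : s ∈ B := by
                rw [hB, Finset.mem_filter]
                exact ⟨Finset.mem_univ s, hε', hm⟩
              simp only [hsB, if_true]
              nlinarith
            · push_neg at hε'
              have hnn : (0:ℝ) ≤ if s ∈ B then (1 - ε) ^ 2 else 0 := by positivity
              nlinarith
      _ = (k : ℝ) * ε ^ 2 + (B.card : ℝ) * (1 - ε) ^ 2 := by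
          rw [Finset.sum_add_distrib, Finset.sum_const, Finset.sum_ite_mem,
            Finset.univ_inter, Finset.sum_const]
          simp [nsmul_eq_mul, mul_comm]
  have hcard : (B.card : ℝ) * (1 - ε) ^ 2 ≤ ((k : ℝ) * ε) * (1 - ε) ^ 2 :=
    mul_le_mul_of_nonneg_right hBk (sq_nonneg _)
  rw [div_mul_eq_mul_div, one_mul, div_le_iff₀ hk0]
  nlinarith [hf, hcard]
end

section
/- Let k : ℕ → ℕ with k(n) ≥ 1, and for each n let e_n ∈ M_{k(n)}(ℂ) be a Hermitian matrix all of whose eigenvalues lie in [0, 1]. Let ε_n be real numbers with 0 < ε_n < 1 and ε_n → 0, and assume for every n that (1/k(n))·Re tr((e_n − e_n²)*·(e_n − e_n²)) ≤ ε_n·(ε_n − ε_n²)². For each n define P_n := U_n·diag(μ₁,…,μ_{k(n)})·U_n*, where e_n = U_n·diag(λ₁,…,λ_{k(n)})·U_n* is a spectral decomposition of e_n and μ_s := 1 if λ_s ≥ 1 − ε_n and μ_s := 0 otherwise. Then (1/k(n))·Re tr((e_n − P_n)*·(e_n − P_n)) → 0 as n → ∞, i.e. ‖e_n − P_n‖_{2,tr}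 → 0. -/
open Matrix Filter in
lemma aux_trace {m : ℕ} (U : Matrix (Fin m) (Fin m) ℂ)
    (hU : U ∈ Matrix.unitaryGroup (Fin m) ℂ) (f : Fin m → ℝ) :
    (Matrix.trace ((U * Matrix.diagonal (fun s => (f s : ℂ)) * Uᴴ)ᴴ *
      (U * Matrix.diagonal (fun s => (f s : ℂ)) * Uᴴ))).re = ∑ s, (f s) ^ 2 := by
  have hUU : Uᴴ * U = 1 := by
    have := Matrix.mem_unitaryGroup_iff'.mp hU
    simpa [Matrix.star_eq_conjTranspose] using this
  set D := Matrix.diagonal (fun s => (f s : ℂ)) with hDdef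
  have hD : Dᴴ = D := by
    simp [hDdef, Matrix.diagonal_conjTranspose]
  have hUU' : ∀ X : Matrix (Fin m) (Fin m) ℂ, Uᴴ * (U * X) = X := fun X => by
    rw [← Matrix.mul_assoc, hUU, Matrix.one_mul]
  have h1 : (U * D * Uᴴ)ᴴ * (U * D * Uᴴ) = U * (D * D) * Uᴴ := by
    simp only [Matrix.conjTranspose_mul, Matrix.conjTranspose_conjTranspose, hD]
    simp [Matrix.mul_assoc, hUU']
  rw [h1, Matrix.trace_mul_cycle, ← Matrix.mul_assoc, hUU, Matrix.one_mul]
  have : D * D = Matrix.diagonal (fun s => ((f s : ℂ) * (f s : ℂ))) := by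
    simp [hDdef, Matrix.diagonal_mul_diagonal]
  rw [this, Matrix.trace_diagonal, Complex.re_sum]
  refine Finset.sum_congr rfl fun s _ => ?_
  have : (f s : ℂ) * (f s : ℂ) = ((f s ^ 2 : ℝ) : ℂ) := by push_cast; ring
  rw [this, Complex.ofReal_re]

lemma aux_ptwise {l e : ℝ} (hl0 : 0 ≤ l) (hl1 : l ≤ 1) (he0 : 0 < e) (he1 : e < 1) :
    (l - (if 1 - e ≤ l then (1 : ℝ) else 0)) ^ 2
      ≤ e ^ 2 + (l - l ^ 2) ^ 2 / (e - e ^ 2) ^ 2 := by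
  have hd0 : 0 < e - e ^ 2 := by nlinarith
  have hd : 0 < (e - e ^ 2) ^ 2 := by positivity
  split_ifs with h
  · have h1 : (l - 1) ^ 2 ≤ e ^ 2 := by nlinarith
    have h2 : 0 ≤ (l - l ^ 2) ^ 2 / (e - e ^ 2) ^ 2 := by positivity
    linarith
  · push_neg at h
    by_cases hle : l ≤ e
    · have h1 : (l - 0) ^ 2 ≤ e ^ 2 := by nlinarith
      have h2 : 0 ≤ (l - l ^ 2) ^ 2 / (e - e ^ 2) ^ 2 := by positivity
      linarith
    · push_neg at hle
      have key : (e - e ^ 2) ^ 2 ≤ (l - l ^ 2) ^ 2 := by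
        have h3 : 0 < (l - e) * (1 - l - e) := by
          apply mul_pos <;> nlinarith
        nlinarith
      have h4 : (1 : ℝ) ≤ (l - l ^ 2) ^ 2 / (e - e ^ 2) ^ 2 := (one_le_div hd).mpr key
      nlinarith

open Matrix Filter in
theorem stmt_3 (k : ℕ → ℕ) (hk : ∀ n, 1 ≤ k n)
    (e U : (n : ℕ) → Matrix (Fin (k n)) (Fin (k n)) ℂ)
    (he : ∀ n, (e n).IsHermitian)
    (hU : ∀ n, U n ∈ Matrix.unitaryGroup (Fin (k n)) ℂ)
    (lam : (n : ℕ) → Fin (k n) → ℝ)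
    (hlam : ∀ n s, 0 ≤ lam n s ∧ lam n s ≤ 1)
    (hdecomp : ∀ n, e n = U n * Matrix.diagonal (fun s => (lam n s : ℂ)) * (U n)ᴴ)
    (ε : ℕ → ℝ) (hε0 : ∀ n, 0 < ε n) (hε1 : ∀ n, ε n < 1)
    (hεlim : Tendsto ε atTop (nhds 0))
    (hsum : ∀ n, (1 / (k n : ℝ)) * (Matrix.trace ((e n - e n ^ 2)ᴴ * (e n - e n ^ 2))).re
      ≤ ε n * (ε n - ε n ^ 2) ^ 2)
    (P : (n : ℕ) → Matrix (Fin (k n)) (Fin (k n)) ℂ)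
    (hP : ∀ n, P n = U n * Matrix.diagonal
      (fun s => if 1 - ε n ≤ lam n s then (1 : ℂ) else 0) * (U n)ᴴ) :
    Tendsto (fun n => (1 / (k n : ℝ)) * (Matrix.trace ((e n - P n)ᴴ * (e n - P n))).re)
      atTop (nhds 0) := by
  -- unitarity helper
  have hUU : ∀ n, (U n)ᴴ * U n = 1 := fun n => by
    have := Matrix.mem_unitaryGroup_iff'.mp (hU n)
    simpa [Matrix.star_eq_conjTranspose] using this
  -- rewrite trace of (e - P)
  have hEP : ∀ n, (Matrix.trace ((e n - P n)ᴴ * (e n - P n))).re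
      = ∑ s, (lam n s - (if 1 - ε n ≤ lam n s then (1 : ℝ) else 0)) ^ 2 := by
    intro n
    have hdiff : e n - P n = U n * Matrix.diagonal
        (fun s => ((lam n s - (if 1 - ε n ≤ lam n s then (1 : ℝ) else 0) : ℝ) : ℂ)) * (U n)ᴴ := by
      rw [hdecomp n, hP n, ← Matrix.sub_mul, ← Matrix.mul_sub, Matrix.diagonal_sub,
        show (fun i => (lam n i : ℂ) - (if 1 - ε n ≤ lam n i then (1 : ℂ) else 0))
          = (fun s => ((lam n s - (if 1 - ε n ≤ lam n s then (1 : ℝ) else 0) : ℝ) : ℂ)) from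
          funext fun s => by split_ifs <;> push_cast <;> ring]
    rw [hdiff, aux_trace (U n) (hU n)]
  -- rewrite trace of (e - e^2)
  have hEE : ∀ n, (Matrix.trace ((e n - e n ^ 2)ᴴ * (e n - e n ^ 2))).re
      = ∑ s, (lam n s - (lam n s) ^ 2) ^ 2 := by
    intro n
    have hsq : e n ^ 2 = U n * Matrix.diagonal (fun s => ((lam n s : ℂ) * (lam n s : ℂ))) * (U n)ᴴ := by
      rw [pow_two, hdecomp n]
      have : U n * Matrix.diagonal (fun s => (lam n s : ℂ)) * (U n)ᴴ *
          (U n * Matrix.diagonal (fun s => (lam n s : ℂ)) * (U n)ᴴ)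
          = U n * (Matrix.diagonal (fun s => (lam n s : ℂ)) *
            Matrix.diagonal (fun s => (lam n s : ℂ))) * (U n)ᴴ := by
        have hUU' : ∀ X : Matrix (Fin (k n)) (Fin (k n)) ℂ, (U n)ᴴ * (U n * X) = X := fun X => by
          rw [← Matrix.mul_assoc, hUU n, Matrix.one_mul]
        have h2 : ∀ X : Matrix (Fin (k n)) (Fin (k n)) ℂ,
            Matrix.diagonal (fun s => (lam n s : ℂ)) * (Matrix.diagonal (fun s => (lam n s : ℂ)) * X)
            = Matrix.diagonal (fun s => (lam n s : ℂ) * (lam n s : ℂ)) * X := fun X => by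
          rw [← Matrix.mul_assoc, Matrix.diagonal_mul_diagonal]
        simp [Matrix.mul_assoc, hUU', h2]
      rw [this, Matrix.diagonal_mul_diagonal]
    have hdiff : e n - e n ^ 2 = U n * Matrix.diagonal
        (fun s => ((lam n s - (lam n s) ^ 2 : ℝ) : ℂ)) * (U n)ᴴ := by
      rw [hsq, hdecomp n, ← Matrix.sub_mul, ← Matrix.mul_sub, Matrix.diagonal_sub]
      rw [show (fun i => (lam n i : ℂ) - (lam n i : ℂ) * (lam n i : ℂ))
          = (fun s => ((lam n s - (lam n s) ^ 2 : ℝ) : ℂ)) from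
          funext fun s => by push_cast; ring]
    rw [hdiff, aux_trace (U n) (hU n)]
  -- squeeze
  have hK : ∀ n, (0 : ℝ) < (k n : ℝ) := fun n => by
    exact_mod_cast Nat.lt_of_lt_of_le Nat.zero_lt_one (hk n)
  have hup : ∀ n, (1 / (k n : ℝ)) * (Matrix.trace ((e n - P n)ᴴ * (e n - P n))).re
      ≤ ε n ^ 2 + ε n := by
    intro n
    rw [hEP n]
    set K := (k n : ℝ) with hKdef
    have hd0 : 0 < ε n - ε n ^ 2 := by nlinarith [hε0 n, hε1 n]
    have hd : 0 < (ε n - ε n ^ 2) ^ 2 := by positivity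
    have hS1 : ∑ s, (lam n s - (if 1 - ε n ≤ lam n s then (1 : ℝ) else 0)) ^ 2
        ≤ ∑ s : Fin (k n), (ε n ^ 2 + (lam n s - (lam n s) ^ 2) ^ 2 / (ε n - ε n ^ 2) ^ 2) := by
      refine Finset.sum_le_sum fun s _ => ?_
      exact aux_ptwise (hlam n s).1 (hlam n s).2 (hε0 n) (hε1 n)
    rw [Finset.sum_add_distrib, Finset.sum_const, Finset.card_univ, Fintype.card_fin,
      ← Finset.sum_div] at hS1
    have hS2 : (1 / K) * ∑ s, (lam n s - (lam n s) ^ 2) ^ 2 ≤ ε n * (ε n - ε n ^ 2) ^ 2 := by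
      have := hsum n
      rw [hEE n] at this
      exact this
    have hKpos := hK n
    have hKinv : 0 < 1 / K := by positivity
    have h1 : (1 / K) * ∑ s, (lam n s - (if 1 - ε n ≤ lam n s then (1 : ℝ) else 0)) ^ 2
        ≤ (1 / K) * ((k n : ℝ) * ε n ^ 2 +
          (∑ s, (lam n s - (lam n s) ^ 2) ^ 2) / (ε n - ε n ^ 2) ^ 2) := by
      exact mul_le_mul_of_nonneg_left (by simpa [nsmul_eq_mul] using hS1) (le_of_lt hKinv)
    have hKK : (1 / K) * K = 1 := by exact one_div_mul_cancel (ne_of_gt hKpos)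
    have hdd : (ε n - ε n ^ 2) ^ 2 * ((ε n - ε n ^ 2) ^ 2)⁻¹ = 1 := mul_inv_cancel₀ (ne_of_gt hd)
    have h2 : (1 / K) * ((k n : ℝ) * ε n ^ 2 +
        (∑ s, (lam n s - (lam n s) ^ 2) ^ 2) / (ε n - ε n ^ 2) ^ 2)
        = ε n ^ 2 + ((1 / K) * ∑ s, (lam n s - (lam n s) ^ 2) ^ 2) / (ε n - ε n ^ 2) ^ 2 := by
      rw [← hKdef]
      rw [mul_add, ← mul_assoc, hKK, one_mul, mul_div_assoc]
    have h3 : ((1 / K) * ∑ s, (lam n s - (lam n s) ^ 2) ^ 2) / (ε n - ε n ^ 2) ^ 2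
        ≤ ε n := by
      rw [div_le_iff₀ hd]
      calc (1 / K) * ∑ s, (lam n s - (lam n s) ^ 2) ^ 2
          ≤ ε n * (ε n - ε n ^ 2) ^ 2 := hS2
        _ = ε n * (ε n - ε n ^ 2) ^ 2 := rfl
    calc (1 / K) * ∑ s, (lam n s - (if 1 - ε n ≤ lam n s then (1 : ℝ) else 0)) ^ 2
        ≤ ε n ^ 2 + ((1 / K) * ∑ s, (lam n s - (lam n s) ^ 2) ^ 2) / (ε n - ε n ^ 2) ^ 2 := by
          rw [← h2]; exact h1
      _ ≤ ε n ^ 2 + ε n := by linarith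
  have hlow : ∀ n, (0 : ℝ) ≤ (1 / (k n : ℝ)) * (Matrix.trace ((e n - P n)ᴴ * (e n - P n))).re := by
    intro n
    rw [hEP n]
    positivity
  have hlim : Tendsto (fun n => ε n ^ 2 + ε n) atTop (nhds 0) := by
    have := (hεlim.pow 2).add hεlim
    simpa using this
  exact tendsto_of_tendsto_of_tendsto_of_le_of_le tendsto_const_nhds hlim hlow hup
end
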